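/- Let 0 < S < 1, 0 < δ < π/2, and 0 < α ≤ π/2. Set p = (√(1 − S²), 0, S) and u = (S, 0, −√(1 − S²)), and let ℓ₁ be the line through p with direction cos δ · u + sin δ · (0, 1, 0). Let ℓ₂ be the image of ℓ₁ under the rotation about the z-axis by angle 2α. Then, with T = tan δ, the squared distance between ℓ₁ and ℓ₂ equals d² = 4 sin²α (1 − S²)² T² / ((S² + T²)(1 − S² sin²α + T² cos²α)). -/

import Mathlib

noncomputable section

open Real

/-- Euclidean 3-space. -/
abbrev E3 := EuclideanSpace ℝ (Fin 3)

/-- A point of ℝ³ from its coordinates. -/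
def pt (a b c : ℝ) : E3 := WithLp.toLp 2 ![a, b, c]

/-- The line through `p` with direction `v`. -/
def lineThrough (p v : E3) : Set E3 := {x | ∃ t : ℝ, x = p + t • v}

/-- The distance between two subsets of ℝ³: `inf {‖a - b‖ : a ∈ A, b ∈ B}`. -/
def setDist (A B : Set E3) : ℝ := sInf {d : ℝ | ∃ a ∈ A, ∃ b ∈ B, d = dist a b}

/-- Rotation about the z-axis by the angle `θ`. -/
def rotZ (θ : ℝ) (x : E3) : E3 :=
  pt (x 0 * Real.cos θ - x 1 * Real.sin θ) (x 0 * Real.sin θ + x 1 * Real.cos θ) (x 2)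

/-! ### Auxiliary lemmas -/

lemma inner_pt (a b c d e f : ℝ) : (inner ℝ (pt a b c) (pt d e f) : ℝ) = a*d + b*e + c*f := by
  simp [pt, PiLp.inner_apply, Fin.sum_univ_three, RCLike.inner_apply, conj_trivial]; ring

lemma pt_sub (a b c d e f : ℝ) : pt a b c - pt d e f = pt (a-d) (b-e) (c-f) := by
  ext i; fin_cases i <;> simp [pt]

lemma lineThrough_smul (p v : E3) (k : ℝ) (hk : k ≠ 0) :
    lineThrough p (k • v) = lineThrough p v := by
  ext x
  constructor
  · rintro ⟨t, rfl⟩; exact ⟨t * k, by rw [smul_smul]⟩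
  · rintro ⟨t, rfl⟩; exact ⟨t / k, by rw [smul_smul, div_mul_cancel₀ _ hk]⟩

lemma rotZ_add_smul (θ : ℝ) (x y : E3) (t : ℝ) :
    rotZ θ (x + t • y) = rotZ θ x + t • rotZ θ y := by
  ext i; fin_cases i <;> simp [rotZ, pt] <;> ring

lemma rotZ_image (θ : ℝ) (p v : E3) :
    rotZ θ '' lineThrough p v = lineThrough (rotZ θ p) (rotZ θ v) := by
  ext x
  simp only [lineThrough, Set.mem_image, Set.mem_setOf_eq]
  constructor
  · rintro ⟨y, ⟨t, rfl⟩, rfl⟩; exact ⟨t, rotZ_add_smul θ p v t⟩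
  · rintro ⟨t, rfl⟩; exact ⟨p + t • v, ⟨t, rfl⟩, rotZ_add_smul θ p v t⟩

/-- The squared distance between two lines, given a common perpendicular direction `n`
and an explicit pair of points realizing it. -/
lemma dist_sq_lines (p q v w n : E3) (hn : (0:ℝ) < inner ℝ n n)
    (hvn : (inner ℝ v n : ℝ) = 0) (hwn : (inner ℝ w n : ℝ) = 0)
    (t s μ : ℝ) (hts : q + s • w - (p + t • v) = μ • n) :
    setDist (lineThrough p v) (lineThrough q w) ^ 2
      = (inner ℝ (q - p) n : ℝ) ^ 2 / inner ℝ n n := by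
  have hinn : (inner ℝ n n : ℝ) = ‖n‖ ^ 2 := real_inner_self_eq_norm_sq n
  have hnpos : 0 < ‖n‖ := by
    rcases eq_or_lt_of_le (norm_nonneg n) with h | h
    · exfalso; rw [hinn, ← h] at hn; simp at hn
    · exact h
  have hn0 : ‖n‖ ≠ 0 := ne_of_gt hnpos
  set D : ℝ := |(inner ℝ (q - p) n : ℝ)| / ‖n‖ with hD
  have hgen : ∀ (t' s' : ℝ),
      (inner ℝ (q + s' • w - (p + t' • v)) n : ℝ) = inner ℝ (q - p) n := by
    intro t' s'
    simp only [inner_sub_left, inner_add_left, real_inner_smul_left, hvn, hwn]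
    ring
  have hdist : ∀ (t' s' : ℝ),
      dist (p + t' • v) (q + s' • w) = ‖q + s' • w - (p + t' • v)‖ := by
    intro t' s'
    rw [dist_eq_norm, ← norm_neg]
    congr 1
    abel
  have hlow : ∀ (t' s' : ℝ), D ≤ dist (p + t' • v) (q + s' • w) := by
    intro t' s'
    have h1 := abs_real_inner_le_norm (q + s' • w - (p + t' • v)) n
    rw [hgen t' s'] at h1
    rw [hdist t' s', hD, div_le_iff₀ hnpos]
    linarith [h1]
  have hattain : dist (p + t • v) (q + s • w) = D := by
    have hμ : μ * inner ℝ n n = inner ℝ (q - p) n := by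
      have h := hgen t s
      rw [hts, real_inner_smul_left] at h
      exact h
    have habs : |μ| * (inner ℝ n n : ℝ) = |(inner ℝ (q - p) n : ℝ)| := by
      rw [← hμ, abs_mul, abs_of_pos hn]
    rw [hdist t s, hts, norm_smul, Real.norm_eq_abs, hD, eq_div_iff hn0]
    calc |μ| * ‖n‖ * ‖n‖ = |μ| * ‖n‖ ^ 2 := by ring
      _ = |μ| * inner ℝ n n := by rw [hinn]
      _ = |(inner ℝ (q - p) n : ℝ)| := habs
  have hls : IsLeast {d : ℝ | ∃ a ∈ lineThrough p v, ∃ b ∈ lineThrough q w, d = dist a b} D := by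
    constructor
    · exact ⟨p + t • v, ⟨t, rfl⟩, q + s • w, ⟨s, rfl⟩, hattain.symm⟩
    · rintro d ⟨a, ⟨t', rfl⟩, b, ⟨s', rfl⟩, rfl⟩
      exact hlow t' s'
  rw [setDist, hls.csInf_eq, hD, div_pow, sq_abs, hinn]

set_option maxHeartbeats 2000000 in
theorem stmt4 (S δ α : ℝ) (hS0 : 0 < S) (hS1 : S < 1)
    (hδ0 : 0 < δ) (hδ1 : δ < π / 2) (hα0 : 0 < α) (hα1 : α ≤ π / 2)
    (p u : E3)
    (hp : p = pt (Real.sqrt (1 - S ^ 2)) 0 S)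
    (hu : u = pt S 0 (-Real.sqrt (1 - S ^ 2)))
    (ℓ₁ ℓ₂ : Set E3)
    (hℓ₁ : ℓ₁ = lineThrough p (Real.cos δ • u + Real.sin δ • pt 0 1 0))
    (hℓ₂ : ℓ₂ = rotZ (2 * α) '' ℓ₁)
    (T : ℝ) (hT : T = Real.tan δ) :
    (setDist ℓ₁ ℓ₂) ^ 2 =
      4 * Real.sin α ^ 2 * (1 - S ^ 2) ^ 2 * T ^ 2 /
        ((S ^ 2 + T ^ 2) * (1 - S ^ 2 * Real.sin α ^ 2 + T ^ 2 * Real.cos α ^ 2)) := by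
  have hπ := Real.pi_pos
  have hcδ : 0 < Real.cos δ := Real.cos_pos_of_mem_Ioo ⟨by linarith, hδ1⟩
  have hsδ : 0 < Real.sin δ := Real.sin_pos_of_pos_of_lt_pi hδ0 (by linarith)
  have hTdef : T = Real.sin δ / Real.cos δ := by rw [hT, Real.tan_eq_sin_div_cos]
  have hT0 : 0 < T := by rw [hTdef]; positivity
  set C := Real.sqrt (1 - S ^ 2) with hCdef
  have hC2 : C ^ 2 = 1 - S ^ 2 := Real.sq_sqrt (by nlinarith)
  have hC0 : 0 < C := Real.sqrt_pos.mpr (by nlinarith)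
  set sa := Real.sin α with hsadef
  set ca := Real.cos α with hcadef
  have hsa : 0 < sa := Real.sin_pos_of_pos_of_lt_pi hα0 (by linarith)
  have hsc : sa ^ 2 + ca ^ 2 = 1 := Real.sin_sq_add_cos_sq α
  subst hℓ₂
  subst hℓ₁
  subst hp
  subst hu
  -- rewrite the first line with a rescaled direction vector
  have hv : Real.cos δ • pt S 0 (-C) + Real.sin δ • pt 0 1 0
      = Real.cos δ • pt S T (-C) := by
    ext i
    fin_cases i <;> simp [pt] <;> rw [hTdef] <;> field_simp
  have hl1 : lineThrough (pt C 0 S) (Real.cos δ • pt S 0 (-C) + Real.sin δ • pt 0 1 0)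
      = lineThrough (pt C 0 S) (pt S T (-C)) := by
    rw [hv, lineThrough_smul _ _ _ (ne_of_gt hcδ)]
  have hq : rotZ (2 * α) (pt C 0 S) = pt (C*(2*ca^2-1)) (C*(2*sa*ca)) S := by
    ext i
    fin_cases i <;> simp [rotZ, pt, Real.cos_two_mul, Real.sin_two_mul, hsadef, hcadef] <;> ring
  have hw : rotZ (2 * α) (pt S T (-C))
      = pt (S*(2*ca^2-1) - T*(2*sa*ca)) (S*(2*sa*ca) + T*(2*ca^2-1)) (-C) := by
    ext i
    fin_cases i <;> simp [rotZ, pt, Real.cos_two_mul, Real.sin_two_mul] <;> ring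
  rw [hl1, rotZ_image, hq, hw]
  -- the common perpendicular and the minimizing parameters
  have hST : 0 < S ^ 2 + T ^ 2 := by positivity
  have hDn : 0 < (S^2+T^2)*(C^2+ca^2*(S^2+T^2)) := by positivity
  have hDd : (0:ℝ) < 4*sa^2*((S^2+T^2)*(C^2+ca^2*(S^2+T^2))) := by positivity
  have hvn : (inner ℝ (pt S T (-C))
      (pt (C*(S*ca - T*sa)) (C*(S*sa + T*ca)) (ca*(S^2+T^2))) : ℝ) = 0 := by
    rw [inner_pt]; ring
  have hwn : (inner ℝ (pt (S*(2*ca^2-1) - T*(2*sa*ca)) (S*(2*sa*ca) + T*(2*ca^2-1)) (-C))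
      (pt (C*(S*ca - T*sa)) (C*(S*sa + T*ca)) (ca*(S^2+T^2))) : ℝ) = 0 := by
    rw [inner_pt]
    linear_combination ((2*C*T^2*ca + 2*S^2*C*ca)) * hsc
  have hnn : (inner ℝ (pt (C*(S*ca - T*sa)) (C*(S*sa + T*ca)) (ca*(S^2+T^2)))
      (pt (C*(S*ca - T*sa)) (C*(S*sa + T*ca)) (ca*(S^2+T^2))) : ℝ)
      = (S^2+T^2)*(C^2+ca^2*(S^2+T^2)) := by
    rw [inner_pt]
    linear_combination ((- T^2 + T^2*ca^2 + T^2*sa^2 - S^2 + S^2*ca^2 + S^2*sa^2)) * hC2 + ((T^2 + S^2 - S^2*T^2 - S^4)) * hsc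
  have hqpn : (inner ℝ (pt (C*(2*ca^2-1)) (C*(2*sa*ca)) S - pt C 0 S)
      (pt (C*(S*ca - T*sa)) (C*(S*sa + T*ca)) (ca*(S^2+T^2))) : ℝ) = 2*sa*C^2*T := by
    rw [pt_sub, inner_pt]
    linear_combination ((- 2*S*ca + 2*S*ca^3 + 2*S*sa^2*ca)) * hC2 + ((2*S*ca - 2*S^3*ca)) * hsc
  have hts : pt (C*(2*ca^2-1)) (C*(2*sa*ca)) S
        + ((- 4*C*T^3*sa*ca + 4*C*T^3*sa*ca^3 - 4*S*C + 4*S*C*ca^2 - 4*S*C*T^2*ca^2 + 4*S*C*T^2*ca^4 - 4*S^2*C*T*sa*ca + 4*S^2*C*T*sa*ca^3 + 4*S^3*C - 8*S^3*C*ca^2 + 4*S^3*C*ca^4) / (4*sa^2*((S^2+T^2)*(C^2+ca^2*(S^2+T^2)))))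
          • pt (S*(2*ca^2-1) - T*(2*sa*ca)) (S*(2*sa*ca) + T*(2*ca^2-1)) (-C)
        - (pt C 0 S
        + ((4*C*T^3*sa*ca - 4*C*T^3*sa*ca^3 - 4*S*C + 4*S*C*ca^2 - 4*S*C*T^2*ca^2 + 4*S*C*T^2*ca^4 + 4*S^2*C*T*sa*ca - 4*S^2*C*T*sa*ca^3 + 4*S^3*C - 8*S^3*C*ca^2 + 4*S^3*C*ca^4) / (4*sa^2*((S^2+T^2)*(C^2+ca^2*(S^2+T^2)))))
          • pt S T (-C))
      = (2*sa*C^2*T / ((S^2+T^2)*(C^2+ca^2*(S^2+T^2))))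
          • pt (C*(S*ca - T*sa)) (C*(S*sa + T*ca)) (ca*(S^2+T^2)) := by
    apply smul_right_injective E3 (ne_of_gt hDd)
    show (4*sa^2*((S^2+T^2)*(C^2+ca^2*(S^2+T^2)))) • _
        = (4*sa^2*((S^2+T^2)*(C^2+ca^2*(S^2+T^2)))) • _
    rw [smul_sub, smul_add, smul_add, smul_smul, smul_smul, smul_smul,
      mul_div_cancel₀ _ (ne_of_gt hDd), mul_div_cancel₀ _ (ne_of_gt hDd)]
    have hmu : 4*sa^2*((S^2+T^2)*(C^2+ca^2*(S^2+T^2)))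
        * (2*sa*C^2*T / ((S^2+T^2)*(C^2+ca^2*(S^2+T^2)))) = 8*sa^3*C^2*T := by
      rw [mul_comm, div_mul_eq_mul_div, div_eq_iff (ne_of_gt hDn)]
      ring
    rw [hmu]
    ext i
    fin_cases i <;>
      simp [pt]
    · linear_combination ((- 8*C*T^2*sa^2 + 8*C*T^2*sa^2*ca^2 + 8*C*T^2*sa^4 - 8*S*C*T*sa^3*ca - 8*S^2*C*sa^2 + 8*S^2*C*sa^2*ca^2)) * hC2 + ((8*C*T^2*sa^2 - 8*S*C*T*sa*ca - 8*S^2*C + 8*S^2*C*ca^2 - 8*S^2*C*T^2*ca^2 + 8*S^2*C*T^2*ca^4 - 8*S^2*C*T^2*sa^2 + 8*S^3*C*T*sa*ca + 8*S^4*C - 16*S^4*C*ca^2 + 8*S^4*C*ca^4)) * hsc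
    · linear_combination ((- 8*S*C*T*sa^4 + 8*S^2*C*sa^3*ca)) * hC2 + ((8*C*T^4*sa*ca^3 - 8*S*C*T + 8*S*C*T*ca^2 - 8*S*C*T*sa^2 - 8*S*C*T^3*ca^2 + 8*S*C*T^3*ca^4 + 8*S^2*C*sa*ca + 16*S^2*C*T^2*sa*ca^3 + 8*S^3*C*T - 16*S^3*C*T*ca^2 + 8*S^3*C*T*ca^4 + 8*S^3*C*T*sa^2 - 8*S^4*C*sa*ca + 8*S^4*C*sa*ca^3)) * hsc
    · linear_combination ((8*T^3*sa*ca - 8*T^3*sa*ca^3 - 8*T^3*sa^3*ca + 8*S^2*T*sa*ca - 8*S^2*T*sa*ca^3 - 8*S^2*T*sa^3*ca)) * hC2 + ((- 8*T^3*sa*ca - 8*S^2*T*sa*ca + 8*S^2*T^3*sa*ca + 8*S^4*T*sa*ca)) * hsc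
  rw [dist_sq_lines (pt C 0 S) (pt (C*(2*ca^2-1)) (C*(2*sa*ca)) S) (pt S T (-C))
      (pt (S*(2*ca^2-1) - T*(2*sa*ca)) (S*(2*sa*ca) + T*(2*ca^2-1)) (-C))
      (pt (C*(S*ca - T*sa)) (C*(S*sa + T*ca)) (ca*(S^2+T^2)))
      (by rw [hnn]; exact hDn) hvn hwn _ _ _ hts,
    hqpn, hnn]
  have hDen2 : (0:ℝ) < (S ^ 2 + T ^ 2) * (1 - S ^ 2 * sa ^ 2 + T ^ 2 * ca ^ 2) := by
    have h2 : 0 < 1 - S ^ 2 * sa ^ 2 + T ^ 2 * ca ^ 2 := by nlinarith [sq_nonneg (T*ca), sq_nonneg ca, hC2, sq_nonneg C]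
    exact mul_pos hST h2
  rw [div_eq_div_iff (ne_of_gt hDn) (ne_of_gt hDen2)]
  linear_combination ((4*T^6*sa^2*ca^2 + 4*C^2*T^4*sa^2 + 4*C^2*T^6*sa^2*ca^2 + 4*S^2*T^4*sa^2 + 4*S^2*T^4*sa^2*ca^2 - 4*S^2*T^4*sa^4 - 4*S^2*T^6*sa^2*ca^2 + 4*S^2*C^2*T^2*sa^2 + 4*S^2*C^2*T^4*sa^2*ca^2 - 4*S^2*C^2*T^4*sa^4 + 4*S^4*T^2*sa^2 - 4*S^4*T^2*sa^4 - 4*S^4*T^4*sa^2 - 4*S^4*T^4*sa^2*ca^2 + 4*S^4*T^4*sa^4 - 4*S^4*C^2*T^2*sa^4 - 4*S^6*T^2*sa^2 + 4*S^6*T^2*sa^4)) * hC2 + ((- 4*S^2*T^4*sa^2 - 4*S^4*T^2*sa^2 + 8*S^4*T^4*sa^2 + 8*S^6*T^2*sa^2 - 4*S^6*T^4*sa^2 - 4*S^8*T^2*sa^2)) * hsc
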